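/- Let α ∈ (ℝ_{≥0}^n)↓, d ≤ n, and let γ^op be the water-filling of α in dimension d. Then for every sequence ℱ = {f_i}_{i=1}^n in ℂ^d with ‖f_i‖² = α_i for all i, and every convex function φ : [0,∞) → [0,∞), one has ∑_{i=1}^d φ(λ_i) ≥ ∑_{i=1}^d φ(γ^op_i), where (λ_i) = λ(S_ℱ) are the eigenvalues of the frame operator of ℱ. Moreover equality for some strictly convex φ forces λ(S_ℱ) = γ^op. -/

import Mathlib

noncomputable def decr {n : ℕ} (x : Fin n → ℝ) : Fin n → ℝ :=
  fun i => x (Tuple.sort x i.rev)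

noncomputable def psum {n : ℕ} (x : Fin n → ℝ) (k : ℕ) : ℝ :=
  ∑ i ∈ Finset.univ.filter (fun i : Fin n => (i : ℕ) < k), x i

/-- `x` is submajorized by `y` : partial sums of the non-increasing
rearrangement of `x` are dominated by those of `y`. -/
def SubMaj {n d : ℕ} (x : Fin n → ℝ) (y : Fin d → ℝ) : Prop :=
  ∀ k : ℕ, psum (decr x) k ≤ psum (decr y) k

/-- majorization (allowing different lengths). -/
def Maj {n d : ℕ} (x : Fin n → ℝ) (y : Fin d → ℝ) : Prop :=
  SubMaj x y ∧ (∑ i, x i) = (∑ i, y i)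

/-- `γ` is the water-filling of `α` in dimension `d`, with water-level `c`. -/
def IsWaterFilling {n : ℕ} (d : ℕ) (hd0 : 0 < d) (hd : d ≤ n)
    (α : Fin n → ℝ) (c : ℝ) (γ : Fin d → ℝ) : Prop :=
  α ⟨d - 1, by omega⟩ ≤ c ∧
  (∑ i : Fin d, max (α (Fin.castLE hd i)) c) = (∑ i, α i) ∧
  ∀ i : Fin d, γ i = max (α (Fin.castLE hd i)) c

/-- squared norm of a vector in ℂ^k -/
noncomputable def sqNorm {k : ℕ} (v : Fin k → ℂ) : ℝ := ∑ a, Complex.normSq (v a)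

/-- frame operator S = ∑ fᵢ ⊗ fᵢ as a matrix -/
noncomputable def frameOp {k n : ℕ} (f : Fin n → Fin k → ℂ) : Matrix (Fin k) (Fin k) ℂ :=
  ∑ i, Matrix.of fun a b => f i a * (starRingEnd ℂ) (f i b)

theorem frameOp_isHermitian {k n : ℕ} (f : Fin n → Fin k → ℂ) :
    (frameOp f).IsHermitian := by
  unfold frameOp Matrix.IsHermitian
  ext a b
  simp [Matrix.conjTranspose_apply, Matrix.sum_apply, mul_comm]

/-- the eigenvalues of the frame operator, in non-increasing order -/
noncomputable def spec {k n : ℕ} (f : Fin n → Fin k → ℂ) : Fin k → ℝ :=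
  decr ((frameOp_isHermitian f).eigenvalues)

open scoped InnerProductSpace
open Finset

set_option maxHeartbeats 1000000

lemma decr_eq_self {n : ℕ} {x : Fin n → ℝ} (hx : Antitone x) : decr x = x := by
  have hmono : Monotone (x ∘ ⇑(Fin.revPerm : Equiv.Perm (Fin n))) := by
    intro i j hij
    exact hx (by simpa using Fin.rev_le_rev.mpr hij)
  have h := (Tuple.comp_sort_eq_comp_iff_monotone (f := x)
    (σ := (Fin.revPerm : Equiv.Perm (Fin n)))).mpr hmono
  funext i
  have := congrFun h.symm i.rev
  simpa [decr] using this

lemma antitone_decr {n : ℕ} (x : Fin n → ℝ) : Antitone (decr x) := by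
  intro i j hij
  exact Tuple.monotone_sort x (by simpa using Fin.rev_le_rev.mpr hij)

lemma sum_decr {n : ℕ} (x : Fin n → ℝ) : ∑ i, decr x i = ∑ i, x i := by
  have : decr x = fun i => x (((Fin.revPerm : Equiv.Perm (Fin n)).trans (Tuple.sort x)) i) := rfl
  rw [this]
  exact Equiv.sum_comp _ x

lemma filter_lt_succ {n : ℕ} (k : ℕ) (hk : k < n) :
    (Finset.univ.filter (fun i : Fin n => (i : ℕ) < k + 1)) =
      insert ⟨k, hk⟩ (Finset.univ.filter (fun i : Fin n => (i : ℕ) < k)) := by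
  ext i
  simp only [Finset.mem_filter, Finset.mem_univ, true_and, Finset.mem_insert]
  constructor
  · intro h
    rcases Nat.lt_succ_iff_lt_or_eq.mp h with h | h
    · exact Or.inr h
    · exact Or.inl (Fin.ext h)
  · rintro (rfl | h)
    · exact Nat.lt_succ_self k
    · exact Nat.lt_succ_of_lt h

lemma psum_zero {n : ℕ} (x : Fin n → ℝ) : psum x 0 = 0 := by simp [psum]

lemma psum_succ {n : ℕ} (x : Fin n → ℝ) (k : ℕ) (hk : k < n) :
    psum x (k + 1) = psum x k + x ⟨k, hk⟩ := by
  rw [psum, psum, filter_lt_succ k hk, Finset.sum_insert (by simp)]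
  ring

lemma filter_lt_of_le {n : ℕ} (k : ℕ) (hk : n ≤ k) :
    (Finset.univ.filter (fun i : Fin n => (i : ℕ) < k)) = Finset.univ := by
  ext i; simp only [Finset.mem_filter, Finset.mem_univ, true_and, iff_true]
  exact lt_of_lt_of_le i.2 hk

lemma psum_of_le {n : ℕ} (x : Fin n → ℝ) (k : ℕ) (hk : n ≤ k) :
    psum x k = ∑ i, x i := by rw [psum, filter_lt_of_le k hk]

lemma card_filter_lt {n : ℕ} (k : ℕ) :
    (Finset.univ.filter (fun i : Fin n => (i : ℕ) < k)).card = min k n := by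
  induction k with
  | zero => simp
  | succ k ih =>
    rcases lt_or_ge k n with h | h
    · rw [filter_lt_succ k h, Finset.card_insert_of_notMem (by simp), ih]
      omega
    · rw [filter_lt_of_le _ (by omega), Finset.card_univ, Fintype.card_fin]
      rw [filter_lt_of_le _ h, Finset.card_univ, Fintype.card_fin] at ih
      omega

open Finset

-- downward-closed subsets of Fin n are prefixes
lemma down_closed_eq_prefix {n : ℕ} (J : Finset (Fin n))
    (hJ : ∀ i j : Fin n, j ≤ i → i ∈ J → j ∈ J) :
    J = Finset.univ.filter (fun i : Fin n => (i : ℕ) < J.card) := by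
  apply Finset.Subset.antisymm
  · intro i hi
    simp only [Finset.mem_filter, Finset.mem_univ, true_and]
    have hsub : (Finset.univ.filter (fun j : Fin n => (j : ℕ) < (i : ℕ) + 1)) ⊆ J := by
      intro j hj
      simp only [Finset.mem_filter, Finset.mem_univ, true_and] at hj
      exact hJ i j (by omega) hi
    have := Finset.card_le_card hsub
    rw [card_filter_lt] at this
    have : min ((i : ℕ) + 1) n ≤ J.card := this
    have hin : (i : ℕ) < n := i.2
    omega
  · intro i hi
    simp only [Finset.mem_filter, Finset.mem_univ, true_and] at hi
    by_contra hni
    have hsub : J ⊆ Finset.univ.filter (fun j : Fin n => (j : ℕ) < (i : ℕ)) := by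
      intro j hj
      simp only [Finset.mem_filter, Finset.mem_univ, true_and]
      by_contra hle
      exact hni (hJ j i (by omega) hj)
    have := Finset.card_le_card hsub
    rw [card_filter_lt] at this
    have hin : (i : ℕ) < n := i.2
    omega

open Finset

lemma slope_mono4 {φ : ℝ → ℝ} (hφ : ConvexOn ℝ (Set.Ici 0) φ) {a b a' b' : ℝ}
    (ha : 0 ≤ a) (hab : a < b) (hab' : a' < b') (haa : a ≤ a') (hbb : b ≤ b') :
    (φ b - φ a) / (b - a) ≤ (φ b' - φ a') / (b' - a') := by
  have ha' : 0 ≤ a' := le_trans ha haa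
  have hb : 0 ≤ b := le_of_lt (lt_of_le_of_lt ha hab)
  have hb' : 0 ≤ b' := le_of_lt (lt_of_le_of_lt ha' hab')
  have h1 : (φ b - φ a) / (b - a) ≤ (φ b' - φ a) / (b' - a) :=
    hφ.secant_mono ha hb hb' (ne_of_gt hab) (ne_of_gt (lt_of_lt_of_le hab hbb)) hbb
  have h2 : (φ a - φ b') / (a - b') ≤ (φ a' - φ b') / (a' - b') :=
    hφ.secant_mono hb' ha ha' (ne_of_lt (lt_of_lt_of_le hab hbb)) (ne_of_lt hab') haa
  calc (φ b - φ a) / (b - a) ≤ (φ b' - φ a) / (b' - a) := h1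
    _ = (φ a - φ b') / (a - b') := by rw [← neg_div_neg_eq]; ring_nf
    _ ≤ (φ a' - φ b') / (a' - b') := h2
    _ = (φ b' - φ a') / (b' - a') := by rw [← neg_div_neg_eq]; ring_nf

lemma slope_strict4 {φ : ℝ → ℝ} (hφ : StrictConvexOn ℝ (Set.Ici 0) φ) {a b a' b' : ℝ}
    (ha : 0 ≤ a) (hab : a < b) (hba : b ≤ a') (hab' : a' < b') :
    (φ b - φ a) / (b - a) < (φ b' - φ a') / (b' - a') := by
  have ha' : 0 ≤ a' := le_trans ha (le_trans (le_of_lt hab) hba)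
  have hb : 0 ≤ b := le_of_lt (lt_of_le_of_lt ha hab)
  have hb' : 0 ≤ b' := le_of_lt (lt_of_le_of_lt ha' hab')
  have hbb' : b ≤ b' := le_trans hba (le_of_lt hab')
  have h1 : (φ b - φ a) / (b - a) ≤ (φ b' - φ a) / (b' - a) :=
    hφ.convexOn.secant_mono ha hb hb' (ne_of_gt hab)
      (ne_of_gt (lt_of_lt_of_le hab hbb')) hbb'
  have h2 : (φ a - φ b') / (a - b') < (φ a' - φ b') / (a' - b') :=
    hφ.secant_strict_mono hb' ha ha' (ne_of_lt (lt_of_lt_of_le hab hbb')) (ne_of_lt hab')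
      (lt_of_lt_of_le hab hba)
  calc (φ b - φ a) / (b - a) ≤ (φ b' - φ a) / (b' - a) := h1
    _ = (φ a - φ b') / (a - b') := by rw [← neg_div_neg_eq]; ring_nf
    _ < (φ a' - φ b') / (a' - b') := h2
    _ = (φ b' - φ a') / (b' - a') := by rw [← neg_div_neg_eq]; ring_nf

lemma psum_eq_range {d : ℕ} (z : Fin d → ℝ) (k : ℕ) (hk : k ≤ d) :
    psum z k = ∑ i ∈ range k, (if h : i < d then z ⟨i, h⟩ else 0) := by
  induction k with
  | zero => simp [psum_zero]
  | succ k ih =>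
    rw [psum_succ z k (by omega), ih (by omega), sum_range_succ, dif_pos (show k < d by omega)]

theorem karamata {d : ℕ} (x y : Fin d → ℝ) (hx : Antitone x) (hy : Antitone y)
    (hx0 : ∀ i, 0 ≤ x i) (hy0 : ∀ i, 0 ≤ y i)
    (hsub : ∀ k : ℕ, psum x k ≤ psum y k) (hsum : ∑ i, x i = ∑ i, y i)
    (φ : ℝ → ℝ) (hφ : ConvexOn ℝ (Set.Ici 0) φ) :
    (∑ i, φ (x i) ≤ ∑ i, φ (y i)) ∧
      (StrictConvexOn ℝ (Set.Ici 0) φ → (∑ i, φ (x i)) = (∑ i, φ (y i)) → y = x) := by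
  classical
  by_cases hxy : x = y
  · subst hxy; exact ⟨le_refl _, fun _ _ => rfl⟩
  · set T : Finset (Fin d) := Finset.univ.filter (fun i => x i ≠ y i) with hTdef
    have hT : T.Nonempty := by
      rcases Function.ne_iff.mp hxy with ⟨i, hi⟩
      exact ⟨i, by simp [hTdef, hi]⟩
    set j₀ : Fin d := T.max' hT with hj₀def
    set sl : Fin d → ℝ :=
      fun i => (φ (max (x i) (y i)) - φ (min (x i) (y i))) /
        (max (x i) (y i) - min (x i) (y i)) with hsldef
    -- slope identity
    have hslid : ∀ i : Fin d, sl i * (y i - x i) = φ (y i) - φ (x i) := by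
      intro i
      rcases lt_trichotomy (x i) (y i) with h | h | h
      · rw [hsldef]
        simp only [max_eq_right (le_of_lt h), min_eq_left (le_of_lt h)]
        rw [div_mul_eq_mul_div, mul_div_assoc, div_self (by linarith : y i - x i ≠ 0), mul_one]
      · simp [h]
      · rw [hsldef]
        simp only [max_eq_left (le_of_lt h), min_eq_right (le_of_lt h)]
        have h2 : y i - x i = -(x i - y i) := by ring
        rw [h2, mul_neg, div_mul_eq_mul_div, mul_div_assoc,
          div_self (by linarith : x i - y i ≠ 0), mul_one]
        ring
    -- slope comparison on T
    have hslmono : ∀ i j : Fin d, i ∈ T → j ∈ T → i ≤ j → sl j ≤ sl i := by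
      intro i j hiT hjT hij
      have hxji : x j ≤ x i := hx hij
      have hyji : y j ≤ y i := hy hij
      have hne_j : x j ≠ y j := by simpa [hTdef] using hjT
      have hne_i : x i ≠ y i := by simpa [hTdef] using hiT
      exact slope_mono4 hφ (le_min (hx0 j) (hy0 j)) (min_lt_max.mpr hne_j)
        (min_lt_max.mpr hne_i) (min_le_min hxji hyji) (max_le_max hxji hyji)
    set C : ℕ → ℝ := fun k =>
      if h : (T.filter (fun j : Fin d => k ≤ (j : ℕ))).Nonempty
      then (T.filter (fun j : Fin d => k ≤ (j : ℕ))).sup' h sl else sl j₀ with hCdef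
    have hCanti : ∀ k k' : ℕ, k ≤ k' → C k' ≤ C k := by
      intro k k' hkk
      have hss : (T.filter (fun j : Fin d => k' ≤ (j : ℕ))) ⊆ (T.filter (fun j : Fin d => k ≤ (j : ℕ))) := by
        intro j hj
        simp only [mem_filter] at hj ⊢
        exact ⟨hj.1, le_trans hkk hj.2⟩
      simp only [hCdef]
      by_cases h' : (T.filter (fun j : Fin d => k' ≤ (j : ℕ))).Nonempty
      · have h : (T.filter (fun j : Fin d => k ≤ (j : ℕ))).Nonempty := h'.mono hss
        rw [dif_pos h', dif_pos h]
        exact Finset.sup'_mono sl hss h'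
      · rw [dif_neg h']
        by_cases h : (T.filter (fun j : Fin d => k ≤ (j : ℕ))).Nonempty
        · rw [dif_pos h]
          rcases h with ⟨j, hj⟩
          have hj₀mem : j₀ ∈ T.filter (fun j : Fin d => k ≤ (j : ℕ)) := by
            simp only [mem_filter] at hj ⊢
            exact ⟨T.max'_mem hT, le_trans hj.2 (T.le_max' j hj.1)⟩
          exact Finset.le_sup' sl hj₀mem
        · rw [dif_neg h]
    have hCT : ∀ i : Fin d, i ∈ T → C (i : ℕ) = sl i := by
      intro i hi
      have hne : (T.filter (fun j : Fin d => (i : ℕ) ≤ (j : ℕ))).Nonempty :=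
        ⟨i, by simp [mem_filter, hi]⟩
      simp only [hCdef]
      rw [dif_pos hne]
      apply le_antisymm
      · apply Finset.sup'_le
        intro j hj
        simp only [mem_filter] at hj
        exact hslmono i j hi hj.1 (by exact_mod_cast hj.2)
      · exact Finset.le_sup' sl (by simp [mem_filter, hi])
    -- ℕ-indexed data
    set X : ℕ → ℝ := fun k => if h : k < d then x ⟨k, h⟩ else 0 with hXdef
    set Y : ℕ → ℝ := fun k => if h : k < d then y ⟨k, h⟩ else 0 with hYdef
    set g : ℕ → ℝ := fun k => Y k - X k with hgdef
    set D : ℕ → ℝ := fun k => ∑ i ∈ range k, g i with hDdef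
    have hDk : ∀ k : ℕ, k ≤ d → D k = psum y k - psum x k := by
      intro k hk
      rw [hDdef]
      simp only [hgdef]
      rw [Finset.sum_sub_distrib, psum_eq_range x k hk, psum_eq_range y k hk]
    have hDd : D d = 0 := by
      rw [hDk d (le_refl d), psum_of_le x d (le_refl d), psum_of_le y d (le_refl d), hsum,
        sub_self]
    have hgzero : ∀ k, d ≤ k → g k = 0 := by
      intro k hk
      rw [hgdef]; simp only [hXdef, hYdef]
      rw [dif_neg (by omega), dif_neg (by omega), sub_zero]
    have hDge : ∀ k, d ≤ k → D k = 0 := by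
      intro k hk
      induction k with
      | zero => rw [hDdef]; simp
      | succ k ih =>
        rcases Nat.lt_or_ge k d with h | h
        · have hkd : k + 1 = d := by omega
          rw [hkd]; exact hDd
        · have hstep : D (k+1) = D k + g k := sum_range_succ g k
          rw [hstep, ih h, hgzero k h, add_zero]
    have hD0 : ∀ k, 0 ≤ D k := by
      intro k
      rcases Nat.lt_or_ge k d with h | h
      · rw [hDk k (le_of_lt h)]
        have := hsub k
        linarith
      · rw [hDge k h]
    -- main identity
    have hgval : ∀ i : Fin d, g (i : ℕ) = y i - x i := by
      intro i
      rw [hgdef]; simp only [hXdef, hYdef]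
      rw [dif_pos i.2, dif_pos i.2]
    have hmain : (∑ i, φ (y i)) - (∑ i, φ (x i)) = ∑ i ∈ range d, C i * g i := by
      rw [← Finset.sum_sub_distrib]
      rw [← Fin.sum_univ_eq_sum_range (fun k => C k * g k) d]
      apply Finset.sum_congr rfl
      intro i _
      rw [hgval i]
      by_cases hiT : i ∈ T
      · rw [hCT i hiT, hslid i]
      · have : x i = y i := by
          by_contra hne
          exact hiT (by simp [hTdef, hne])
        rw [this]; ring
    -- Abel summation
    have habel : ∑ i ∈ range d, C i * g i =
        C (d - 1) * D d - ∑ i ∈ range (d - 1), (C (i + 1) - C i) * D (i + 1) := by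
      have := Finset.sum_range_by_parts C g d
      simpa [hDdef, smul_eq_mul] using this
    have hterm : ∀ i ∈ range (d - 1), 0 ≤ (C i - C (i + 1)) * D (i + 1) := by
      intro i _
      apply mul_nonneg _ (hD0 (i + 1))
      have := hCanti i (i + 1) (by omega)
      linarith
    have hflip : ∑ i ∈ range d, C i * g i
        = ∑ i ∈ range (d - 1), (C i - C (i + 1)) * D (i + 1) := by
      rw [habel, hDd]
      rw [mul_zero, zero_sub, ← Finset.sum_neg_distrib]
      apply Finset.sum_congr rfl
      intro i _; ring
    have hge : (0:ℝ) ≤ ∑ i ∈ range d, C i * g i := by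
      rw [hflip]
      exact Finset.sum_nonneg hterm
    constructor
    · linarith [hmain ▸ hge]
    · -- strict case
      intro hφs heq
      exfalso
      have hzero : ∑ i ∈ range (d - 1), (C i - C (i + 1)) * D (i + 1) = 0 := by
        rw [← hflip, ← hmain, heq, sub_self]
      have hallzero : ∀ i ∈ range (d - 1), (C i - C (i + 1)) * D (i + 1) = 0 :=
        (Finset.sum_eq_zero_iff_of_nonneg hterm).mp hzero
      set i₀ : Fin d := T.min' hT with hi₀def
      have hgi₀pos : 0 < g (i₀ : ℕ) := by
        have hne : g (i₀ : ℕ) ≠ 0 := by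
          rw [hgval i₀]
          have : x i₀ ≠ y i₀ := by simpa [hTdef] using T.min'_mem hT
          intro hcon; apply this; linarith [sub_eq_zero.mp hcon]
        have hDi₀ : D (i₀ : ℕ) = 0 := by
          rw [hDdef]
          apply Finset.sum_eq_zero
          intro j hj
          simp only [mem_range] at hj
          have hjd : j < d := lt_trans hj i₀.2
          have : (⟨j, hjd⟩ : Fin d) ∉ T := by
            intro hmem
            have h3 := T.min'_le _ hmem
            have h4 : (i₀ : ℕ) ≤ j := Fin.le_def.mp h3
            omega
          have hxy' : x ⟨j, hjd⟩ = y ⟨j, hjd⟩ := by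
            by_contra hne'
            exact this (by simp [hTdef, hne'])
          rw [hgval ⟨j, hjd⟩, hxy', sub_self]
        have hDsucc : D ((i₀ : ℕ) + 1) = g (i₀ : ℕ) := by
          have hstep : D ((i₀ : ℕ) + 1) = D (i₀ : ℕ) + g (i₀ : ℕ) := sum_range_succ g _
          rw [hstep, hDi₀, zero_add]
        have := hD0 ((i₀ : ℕ) + 1)
        rw [hDsucc] at this
        exact lt_of_le_of_ne this (Ne.symm hne)
      have hDi₀succ : 0 < D ((i₀ : ℕ) + 1) := by
        have hstep : D ((i₀ : ℕ) + 1) = D (i₀ : ℕ) + g (i₀ : ℕ) := sum_range_succ g _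
        have hDi₀ : 0 ≤ D (i₀ : ℕ) := hD0 _
        rw [hstep]
        linarith
      have hi₀d : (i₀ : ℕ) + 1 < d := by
        by_contra hcon
        have : d ≤ (i₀ : ℕ) + 1 := by omega
        rw [hDge _ this] at hDi₀succ
        exact lt_irrefl 0 hDi₀succ
      -- find b
      have hdecP : DecidablePred (fun m => (i₀ : ℕ) < m ∧ D m = 0) := fun _ => Classical.dec _
      have hPd : (i₀ : ℕ) < d ∧ D d = 0 := ⟨i₀.2, hDd⟩
      have hPex : ∃ m, (i₀ : ℕ) < m ∧ D m = 0 := ⟨d, hPd⟩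
      set b : ℕ := @Nat.find _ hdecP hPex with hbdef
      have hbspec : (i₀ : ℕ) < b ∧ D b = 0 := @Nat.find_spec _ hdecP hPex
      have hbmin : ∀ m, m < b → ¬((i₀ : ℕ) < m ∧ D m = 0) :=
        fun m hm => @Nat.find_min _ hdecP hPex m hm
      have hbd : b ≤ d := @Nat.find_min' _ hdecP hPex d hPd
      have hb2 : (i₀ : ℕ) + 2 ≤ b := by
        rcases hbspec with ⟨hb1, hb0⟩
        by_contra hcon
        have : b = (i₀ : ℕ) + 1 := by omega
        rw [this] at hb0
        rw [hb0] at hDi₀succ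
        exact lt_irrefl 0 hDi₀succ
      have hDpos : ∀ j, (i₀ : ℕ) < j → j < b → 0 < D j := by
        intro j h1 h2
        have := hbmin j h2
        have hne : D j ≠ 0 := by tauto
        exact lt_of_le_of_ne (hD0 j) (Ne.symm hne)
      set j₁ : ℕ := b - 1 with hj₁def
      have hj₁i₀ : (i₀ : ℕ) < j₁ := by omega
      have hj₁d : j₁ < d := by omega
      have hgj₁neg : g j₁ < 0 := by
        have : D b = D j₁ + g j₁ := by
          rw [hDdef]
          have : b = j₁ + 1 := by omega
          rw [this]
          exact sum_range_succ g j₁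
        have hDj₁ : 0 < D j₁ := hDpos j₁ hj₁i₀ (by omega)
        rw [hbspec.2] at this
        linarith
      set J₁ : Fin d := ⟨j₁, hj₁d⟩ with hJ₁def
      have hJ₁T : J₁ ∈ T := by
        have : y J₁ - x J₁ < 0 := by rw [← hgval J₁]; exact hgj₁neg
        simp only [hTdef, mem_filter, mem_univ, true_and]
        intro hcon; rw [hcon] at this; linarith
      -- C constant from i₀ to j₁
      have hCconst : ∀ j : ℕ, (i₀ : ℕ) ≤ j → j ≤ j₁ → C j = C (i₀ : ℕ) := by
        intro j
        induction j with
        | zero => intro h1 _; have : (i₀ : ℕ) = 0 := by omega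
                  rw [this]
        | succ j ih =>
          intro h1 h2
          rcases Nat.lt_or_ge j (i₀ : ℕ) with h | h
          · have : (i₀ : ℕ) = j + 1 := by omega
            rw [this]
          · have hjle : j ≤ j₁ := by omega
            rw [← ih h (by omega)]
            have hjrange : j ∈ range (d - 1) := by
              simp only [mem_range]; omega
            have := hallzero j hjrange
            have hDj : 0 < D (j + 1) := hDpos (j + 1) (by omega) (by omega)
            have : C j - C (j + 1) = 0 := by
              rcases mul_eq_zero.mp this with h' | h'
              · exact h'
              · exfalso; rw [h'] at hDj; exact lt_irrefl 0 hDj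
            linarith
      have hCeq : sl J₁ = sl i₀ := by
        rw [← hCT J₁ hJ₁T, ← hCT i₀ (T.min'_mem hT)]
        exact hCconst j₁ (by omega) (le_refl j₁)
      -- strict slope comparison gives contradiction
      have hxi₀ : x i₀ < y i₀ := by
        have := hgi₀pos; rw [hgval i₀] at this; linarith
      have hyJ₁ : y J₁ < x J₁ := by
        have := hgj₁neg; rw [hgval J₁] at this; linarith
      have hxJ₁i₀ : x J₁ ≤ x i₀ := hx (Fin.le_def.mpr (le_of_lt hj₁i₀))
      have hstrict : sl J₁ < sl i₀ := by
        have h1 : sl J₁ = (φ (x J₁) - φ (y J₁)) / (x J₁ - y J₁) := by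
          rw [hsldef]
          simp only [max_eq_left (le_of_lt hyJ₁), min_eq_right (le_of_lt hyJ₁)]
        have h2 : sl i₀ = (φ (y i₀) - φ (x i₀)) / (y i₀ - x i₀) := by
          rw [hsldef]
          simp only [max_eq_right (le_of_lt hxi₀), min_eq_left (le_of_lt hxi₀)]
        rw [h1, h2]
        exact slope_strict4 hφs (hy0 J₁) hyJ₁ hxJ₁i₀ hxi₀
      rw [hCeq] at hstrict
      exact lt_irrefl _ hstrict

noncomputable def toE {d : ℕ} (u : Fin d → ℂ) : EuclideanSpace ℂ (Fin d) :=
  (WithLp.equiv 2 _).symm u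

noncomputable def ip {d : ℕ} (u v : Fin d → ℂ) : ℂ := ∑ a, (starRingEnd ℂ) (u a) * v a

lemma inner_toE {d : ℕ} (u v : Fin d → ℂ) : ⟪toE u, toE v⟫_ℂ = ip u v := by
  rw [PiLp.inner_apply]; simp only [RCLike.inner_apply']; rfl

lemma ip_conj {d : ℕ} (u v : Fin d → ℂ) : ip u v = (starRingEnd ℂ) (ip v u) := by
  simp [ip, map_sum, mul_comm]

lemma normSq_ip_conj {d : ℕ} (u v : Fin d → ℂ) :
    Complex.normSq (ip u v) = Complex.normSq (ip v u) := by
  rw [ip_conj, Complex.normSq_conj]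

lemma norm_toE_sq {d : ℕ} (u : Fin d → ℂ) : ‖toE u‖^2 = ∑ a, Complex.normSq (u a) := by
  rw [EuclideanSpace.norm_eq, Real.sq_sqrt (by positivity)]
  congr 1; funext a
  show ‖u a‖^2 = Complex.normSq (u a)
  rw [Complex.sq_norm]

lemma normSq_norm_sq (z : ℂ) : Complex.normSq z = ‖z‖^2 := by
  rw [Complex.sq_norm]

lemma parseval {E' : Type*} [NormedAddCommGroup E'] [InnerProductSpace ℂ E']
    {ι : Type*} [Fintype ι] (b : OrthonormalBasis ι ℂ E') (v : E') :
    ∑ i, ‖⟪b i, v⟫_ℂ‖^2 = ‖v‖^2 := by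
  have h := b.repr.norm_map v
  rw [← h, EuclideanSpace.norm_eq, Real.sq_sqrt (by positivity)]
  congr 1; funext i
  rw [b.repr_apply_apply]

lemma ipA {d n : ℕ} (f : Fin n → Fin d → ℂ) (u : Fin d → ℂ) :
    ip u ((frameOp f).mulVec u) = ∑ i, (Complex.normSq (ip (f i) u) : ℂ) := by
  have : ∀ a, (frameOp f).mulVec u a = ∑ i, (∑ b, (starRingEnd ℂ) (f i b) * u b) * f i a := by
    intro a
    simp only [frameOp, Matrix.mulVec, dotProduct, Matrix.sum_apply, Matrix.of_apply,
      Finset.sum_mul]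
    rw [Finset.sum_comm]
    congr 1; funext i; congr 1; funext b; ring
  simp only [ip, this, Finset.mul_sum]
  rw [Finset.sum_comm]
  congr 1; funext i
  have h1 : ∑ x, (starRingEnd ℂ) (u x) * ((∑ b, (starRingEnd ℂ) (f i b) * u b) * f i x)
      = (∑ b, (starRingEnd ℂ) (f i b) * u b) * (∑ x, (starRingEnd ℂ) (u x) * f i x) := by
    rw [Finset.mul_sum]; congr 1; funext x; ring
  rw [h1]
  have h2 : (∑ x, (starRingEnd ℂ) (u x) * f i x)
      = (starRingEnd ℂ) (∑ a, (starRingEnd ℂ) (f i a) * u a) := by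
    rw [map_sum]; congr 1; funext a; rw [map_mul, Complex.conj_conj]; ring
  rw [h2, Complex.mul_conj]

section Spec

variable {d n : ℕ} (f : Fin n → Fin d → ℂ)

lemma toE_mulVec (u : Fin d → ℂ) (A : Matrix (Fin d) (Fin d) ℂ) :
    Matrix.toEuclideanLin A (toE u) = toE (A.mulVec u) := by
  simp [Matrix.toEuclideanLin_apply, toE]

lemma inner_frameOp (u v : Fin d → ℂ) :
    ⟪toE u, Matrix.toEuclideanLin (frameOp f) (toE v)⟫_ℂ = ip u ((frameOp f).mulVec v) := by
  rw [toE_mulVec, inner_toE]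

-- eigen data
noncomputable def ev : Fin d → ℝ := (frameOp_isHermitian f).eigenvalues

noncomputable def eb : OrthonormalBasis (Fin d) ℂ (EuclideanSpace ℂ (Fin d)) :=
  (frameOp_isHermitian f).eigenvectorBasis

lemma toE_eb (j : Fin d) : toE ⇑(eb f j) = eb f j := rfl

lemma AE_eb (j : Fin d) :
    Matrix.toEuclideanLin (frameOp f) (eb f j) = ((ev f j : ℂ)) • eb f j := by
  have h : (frameOp f).mulVec ⇑(eb f j) = ev f j • ⇑(eb f j) :=
    (frameOp_isHermitian f).mulVec_eigenvectorBasis j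
  have h2 : Matrix.toEuclideanLin (frameOp f) (toE ⇑(eb f j)) = toE ((frameOp f).mulVec ⇑(eb f j)) :=
    toE_mulVec _ _
  rw [toE_eb] at h2
  rw [h2, h]
  apply (WithLp.equiv 2 (Fin d → ℂ)).injective
  funext a
  simp [toE, Complex.real_smul]

lemma ev_eq (j : Fin d) : ev f j = ∑ i, Complex.normSq (ip (f i) ⇑(eb f j)) := by
  have h1 : ip ⇑(eb f j) ((frameOp f).mulVec ⇑(eb f j))
      = ∑ i, (Complex.normSq (ip (f i) ⇑(eb f j)) : ℂ) := ipA f _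
  have h2 : ⟪toE ⇑(eb f j), Matrix.toEuclideanLin (frameOp f) (toE ⇑(eb f j))⟫_ℂ
      = ip ⇑(eb f j) ((frameOp f).mulVec ⇑(eb f j)) := inner_frameOp f _ _
  rw [toE_eb, AE_eb] at h2
  rw [inner_smul_right] at h2
  have h3 : ⟪eb f j, eb f j⟫_ℂ = 1 := by
    rw [inner_self_eq_norm_sq_to_K]
    rw [(eb f).orthonormal.1 j]
    norm_num
  rw [h3, mul_one] at h2
  have h4 : ((ev f j : ℂ)) = ∑ i, (Complex.normSq (ip (f i) ⇑(eb f j)) : ℂ) := by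
    rw [h2, h1]
  exact_mod_cast h4

lemma ev_nonneg (j : Fin d) : 0 ≤ ev f j := by
  rw [ev_eq]
  exact Finset.sum_nonneg fun i _ => Complex.normSq_nonneg _

lemma quad_form (u : Fin d → ℂ) :
    ip u ((frameOp f).mulVec u) = ∑ l, ((ev f l : ℂ)) * Complex.normSq ⟪eb f l, toE u⟫_ℂ := by
  have hsymm : (Matrix.toEuclideanLin (frameOp f)).IsSymmetric :=
    Matrix.isHermitian_iff_isSymmetric.mp (frameOp_isHermitian f)
  set AE := Matrix.toEuclideanLin (frameOp f) with hAE
  have h0 : ip u ((frameOp f).mulVec u) = ⟪toE u, AE (toE u)⟫_ℂ := (inner_frameOp f u u).symm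
  rw [h0]
  have h1 : ⟪toE u, AE (toE u)⟫_ℂ = ⟪(eb f).repr (toE u), (eb f).repr (AE (toE u))⟫_ℂ :=
    ((eb f).repr.inner_map_map _ _).symm
  rw [h1, PiLp.inner_apply]
  simp only [RCLike.inner_apply]
  congr 1; funext l
  rw [OrthonormalBasis.repr_apply_apply, OrthonormalBasis.repr_apply_apply]
  have h2 : ⟪eb f l, AE (toE u)⟫_ℂ = ((ev f l : ℂ)) * ⟪eb f l, toE u⟫_ℂ := by
    rw [← hsymm (eb f l) (toE u), AE_eb, inner_smul_left, Complex.conj_ofReal]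
  rw [h2]
  have h3 : (starRingEnd ℂ) ⟪eb f l, toE u⟫_ℂ * ⟪eb f l, toE u⟫_ℂ
      = (Complex.normSq ⟪eb f l, toE u⟫_ℂ : ℂ) := by
    rw [← Complex.normSq_eq_conj_mul_self]
  rw [mul_assoc, mul_comm _ ((starRingEnd ℂ) _), h3]

lemma quad_form_re (u : Fin d → ℂ) :
    ∑ i, Complex.normSq (ip (f i) u) = ∑ l, ev f l * Complex.normSq ⟪eb f l, toE u⟫_ℂ := by
  have h := (quad_form f u).symm.trans (ipA f u)
  have := congrArg Complex.re h
  push_cast at this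
  convert this.symm using 2 <;> simp

end Spec

open scoped InnerProductSpace
open Finset

lemma spec_antitone {d n : ℕ} (f : Fin n → Fin d → ℂ) : Antitone (spec f) := antitone_decr _

lemma spec_nonneg {d n : ℕ} (f : Fin n → Fin d → ℂ) (j : Fin d) : 0 ≤ spec f j := by
  unfold spec decr
  exact ev_nonneg f _

lemma alpha_norm {d n : ℕ} (f : Fin n → Fin d → ℂ) (α : Fin n → ℝ)
    (hf : ∀ i, sqNorm (f i) = α i) (i : Fin n) : α i = ‖toE (f i)‖^2 := by
  rw [← hf i, sqNorm, norm_toE_sq]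

theorem trace_eq {d n : ℕ} (f : Fin n → Fin d → ℂ) (α : Fin n → ℝ)
    (hf : ∀ i, sqNorm (f i) = α i) : ∑ i, α i = ∑ j, spec f j := by
  rw [show spec f = decr (ev f) from rfl, sum_decr]
  have h1 : ∀ j, ev f j = ∑ i, Complex.normSq (ip (f i) ⇑(eb f j)) := ev_eq f
  calc ∑ i, α i = ∑ i, ∑ j, ‖⟪eb f j, toE (f i)⟫_ℂ‖^2 := by
        apply Finset.sum_congr rfl
        intro i _
        rw [alpha_norm f α hf i, parseval (eb f) (toE (f i))]
    _ = ∑ j, ∑ i, Complex.normSq (ip (f i) ⇑(eb f j)) := by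
        rw [Finset.sum_comm]
        apply Finset.sum_congr rfl; intro j _
        apply Finset.sum_congr rfl; intro i _
        calc ‖⟪eb f j, toE (f i)⟫_ℂ‖^2
            = Complex.normSq ⟪eb f j, toE (f i)⟫_ℂ := (normSq_norm_sq _).symm
          _ = Complex.normSq ((starRingEnd ℂ) ⟪eb f j, toE (f i)⟫_ℂ) :=
              (Complex.normSq_conj _).symm
          _ = Complex.normSq ⟪toE (f i), eb f j⟫_ℂ := by rw [inner_conj_symm]
          _ = Complex.normSq (ip (f i) ⇑(eb f j)) := by rw [← inner_toE]; rfl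
    _ = ∑ j, ev f j := by
        apply Finset.sum_congr rfl; intro j _
        exact (h1 j).symm

lemma dot_le {d : ℕ} (μ s : Fin d → ℝ) (k : ℕ) (hk : k < d) (hμ0 : ∀ l, 0 ≤ μ l)
    (hs0 : ∀ l, 0 ≤ s l) (hs1 : ∀ l, s l ≤ 1) (hsum : ∑ l, s l ≤ (k : ℝ)) :
    ∑ l, μ l * s l ≤ psum (decr μ) k := by
  set σ : Equiv.Perm (Fin d) := (Fin.revPerm : Equiv.Perm (Fin d)).trans (Tuple.sort μ) with hσ
  set ν : Fin d → ℝ := decr μ with hν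
  set t : Fin d → ℝ := fun l => s (σ l) with ht
  have hresum : ∑ l, μ l * s l = ∑ l, ν l * t l := (Equiv.sum_comp σ (fun l => μ l * s l)).symm
  have htsum : ∑ l, t l = ∑ l, s l := Equiv.sum_comp σ s
  have hνanti : Antitone ν := antitone_decr μ
  have hν0 : ∀ l, 0 ≤ ν l := fun l => hμ0 _
  have ht0 : ∀ l, 0 ≤ t l := fun l => hs0 _
  have ht1 : ∀ l, t l ≤ 1 := fun l => hs1 _
  rw [hresum]
  obtain ⟨K, hKval⟩ : ∃ K : Fin d, (K : ℕ) = k := ⟨⟨k, hk⟩, rfl⟩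
  have hcard : (univ.filter (fun l : Fin d => (l : ℕ) < k)).card = k := by
    rw [card_filter_lt]; omega
  have hsplit : ∑ l ∈ univ.filter (fun l : Fin d => (l : ℕ) < k), (ν l * t l)
      + ∑ l ∈ univ.filter (fun l : Fin d => ¬ ((l : ℕ) < k)), (ν l * t l)
      = ∑ l, ν l * t l := Finset.sum_filter_add_sum_filter_not univ _ _
  have h1 : ∑ l ∈ univ.filter (fun l : Fin d => (l : ℕ) < k), (ν l * t l)
      ≤ ∑ l ∈ univ.filter (fun l : Fin d => (l : ℕ) < k), (ν l + ν K * (t l - 1)) := by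
    apply Finset.sum_le_sum
    intro l hl
    simp only [mem_filter, mem_univ, true_and] at hl
    have hKl : ν K ≤ ν l := hνanti (Fin.le_def.mpr (by omega))
    have := mul_le_mul_of_nonpos_right hKl (by linarith [ht1 l] : t l - 1 ≤ 0)
    nlinarith [this]
  have h1' : ∑ l ∈ univ.filter (fun l : Fin d => (l : ℕ) < k), (ν l + ν K * (t l - 1))
      = psum ν k + ν K * ((∑ l ∈ univ.filter (fun l : Fin d => (l : ℕ) < k), t l) - k) := by
    rw [Finset.sum_add_distrib, ← Finset.mul_sum, Finset.sum_sub_distrib, Finset.sum_const,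
      hcard, nsmul_eq_mul, mul_one]
    rfl
  have h2 : ∑ l ∈ univ.filter (fun l : Fin d => ¬ ((l : ℕ) < k)), (ν l * t l)
      ≤ ν K * ∑ l ∈ univ.filter (fun l : Fin d => ¬ ((l : ℕ) < k)), t l := by
    rw [Finset.mul_sum]
    apply Finset.sum_le_sum
    intro l hl
    simp only [mem_filter, mem_univ, true_and, not_lt] at hl
    have hKl : ν l ≤ ν K := hνanti (Fin.le_def.mpr (by omega))
    exact mul_le_mul_of_nonneg_right hKl (ht0 l)
  have hts : ∑ l ∈ univ.filter (fun l : Fin d => (l : ℕ) < k), t l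
      + ∑ l ∈ univ.filter (fun l : Fin d => ¬ ((l : ℕ) < k)), t l = ∑ l, t l :=
    Finset.sum_filter_add_sum_filter_not univ _ t
  have hlast : ν K * (∑ l, t l - k) ≤ 0 :=
    mul_nonpos_of_nonneg_of_nonpos (hν0 K) (by rw [htsum]; linarith)
  have hfil : ∑ l ∈ univ.filter (fun l : Fin d => (l : ℕ) < k), ν l = psum ν k := rfl
  have hts' : ν K * (∑ l ∈ univ.filter (fun l : Fin d => (l : ℕ) < k), t l)
      + ν K * (∑ l ∈ univ.filter (fun l : Fin d => ¬ ((l : ℕ) < k)), t l)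
      = ν K * (∑ l, t l) := by
    rw [← mul_add, hts]
  linarith [h1, h1', h2, hts', hlast, hsplit]

open scoped InnerProductSpace
open Finset

set_option maxHeartbeats 1000000

lemma bessel_span {E' : Type*} [NormedAddCommGroup E'] [InnerProductSpace ℂ E']
    [FiniteDimensional ℂ E'] {ι : Type*} [Fintype ι] (w : ι → E') (J : Finset ι) :
    ∃ (r : ℕ) (g : Fin r → E'), Orthonormal ℂ g ∧ r ≤ J.card ∧
      ∀ i ∈ J, ‖w i‖^2 = ∑ j, ‖⟪g j, w i⟫_ℂ‖^2 := by
  classical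
  set s : Finset E' := J.image w with hs
  set V : Submodule ℂ E' := Submodule.span ℂ (s : Set E') with hV
  have hrk : Module.finrank ℂ V ≤ J.card := by
    have h1 : Set.finrank ℂ (s : Set E') ≤ s.card := finrank_span_finset_le_card s
    have h2 : s.card ≤ J.card := by rw [hs]; exact Finset.card_image_le
    exact le_trans h1 h2
  set b := stdOrthonormalBasis ℂ V with hb
  refine ⟨Module.finrank ℂ V, fun j => ((b j : V) : E'), ?_, hrk, ?_⟩
  · rw [orthonormal_iff_ite]
    intro i j
    have h := orthonormal_iff_ite.mp b.orthonormal i j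
    rwa [Submodule.coe_inner] at h
  · intro i hi
    have hmem : w i ∈ V := Submodule.subset_span (Finset.mem_coe.mpr (Finset.mem_image_of_mem w hi))
    calc ‖w i‖^2 = ‖(⟨w i, hmem⟩ : V)‖^2 := by rw [← Submodule.norm_coe (⟨w i, hmem⟩ : V)]
      _ = ∑ j, ‖⟪b j, (⟨w i, hmem⟩ : V)⟫_ℂ‖^2 := (parseval b _).symm
      _ = ∑ j, ‖⟪((b j : V) : E'), w i⟫_ℂ‖^2 := by
          apply Finset.sum_congr rfl; intro j _
          rw [Submodule.coe_inner]

theorem alpha_submaj {d n : ℕ} (f : Fin n → Fin d → ℂ) (α : Fin n → ℝ)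
    (hf : ∀ i, sqNorm (f i) = α i) (hα0 : ∀ i, 0 ≤ α i) :
    ∀ k : ℕ, psum α k ≤ psum (spec f) k := by
  classical
  intro k
  rcases Nat.lt_or_ge k d with hk | hk
  · obtain ⟨r, g, hgon, hrk, hpar⟩ :=
      bessel_span (fun i : Fin n => toE (f i)) (univ.filter (fun i : Fin n => (i : ℕ) < k))
    rw [card_filter_lt] at hrk
    have hrk' : r ≤ k := le_trans hrk (min_le_left _ _)
    have hgnorm : ∀ j, ‖g j‖ = 1 := fun j => hgon.1 j
    have step1 : psum α k = ∑ j, ∑ i ∈ univ.filter (fun i : Fin n => (i : ℕ) < k),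
        ‖⟪g j, toE (f i)⟫_ℂ‖^2 := by
      rw [psum, Finset.sum_congr rfl (fun i hi => (alpha_norm f α hf i).trans (hpar i hi)),
        Finset.sum_comm]
    have step3 : ∑ j, ∑ i ∈ univ.filter (fun i : Fin n => (i : ℕ) < k), ‖⟪g j, toE (f i)⟫_ℂ‖^2
        ≤ ∑ j, ∑ i : Fin n, ‖⟪g j, toE (f i)⟫_ℂ‖^2 := by
      apply Finset.sum_le_sum
      intro j _
      exact Finset.sum_le_sum_of_subset_of_nonneg (Finset.filter_subset _ _)
        (fun i _ _ => by positivity)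
    have step4 : ∀ j, ∑ i : Fin n, ‖⟪g j, toE (f i)⟫_ℂ‖^2
        = ∑ l, ev f l * Complex.normSq ⟪eb f l, g j⟫_ℂ := by
      intro j
      have hu : toE (WithLp.equiv 2 (Fin d → ℂ) (g j)) = g j := rfl
      calc ∑ i : Fin n, ‖⟪g j, toE (f i)⟫_ℂ‖^2
          = ∑ i, Complex.normSq (ip (f i) (WithLp.equiv 2 (Fin d → ℂ) (g j))) := by
            apply Finset.sum_congr rfl; intro i _
            rw [← normSq_norm_sq,
              show ⟪g j, toE (f i)⟫_ℂ = ip (WithLp.equiv 2 (Fin d → ℂ) (g j)) (f i) from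
                inner_toE _ _, normSq_ip_conj]
        _ = ∑ l, ev f l * Complex.normSq ⟪eb f l, toE (WithLp.equiv 2 (Fin d → ℂ) (g j))⟫_ℂ :=
            quad_form_re f _
        _ = ∑ l, ev f l * Complex.normSq ⟪eb f l, g j⟫_ℂ := by rw [hu]
    set t : Fin d → ℝ := fun l => ∑ j, Complex.normSq ⟪eb f l, g j⟫_ℂ with htdef
    have step5 : ∑ j, ∑ l, ev f l * Complex.normSq ⟪eb f l, g j⟫_ℂ = ∑ l, ev f l * t l := by
      rw [Finset.sum_comm]
      apply Finset.sum_congr rfl; intro l _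
      rw [htdef, Finset.mul_sum]
    have ht0 : ∀ l, 0 ≤ t l := fun l => Finset.sum_nonneg fun j _ => Complex.normSq_nonneg _
    have ht1 : ∀ l, t l ≤ 1 := by
      intro l
      have hb1 : ∑ j, ‖⟪g j, eb f l⟫_ℂ‖^2 ≤ ‖eb f l‖^2 := hgon.sum_inner_products_le _
      have heq : t l = ∑ j, ‖⟪g j, eb f l⟫_ℂ‖^2 := by
        apply Finset.sum_congr rfl; intro j _
        rw [← normSq_norm_sq, ← Complex.normSq_conj, inner_conj_symm]
      rw [heq]
      rw [(eb f).orthonormal.1 l] at hb1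
      simpa using hb1
    have htsum : ∑ l, t l ≤ (k : ℝ) := by
      have h1 : ∑ l, t l = ∑ j, ∑ l, Complex.normSq ⟪eb f l, g j⟫_ℂ := by
        simp only [htdef]; exact Finset.sum_comm
      have h2 : ∀ j : Fin r, ∑ l, Complex.normSq ⟪eb f l, g j⟫_ℂ = 1 := by
        intro j
        have hp := parseval (eb f) (g j)
        rw [hgnorm j] at hp
        have h3 : ∑ l, Complex.normSq ⟪eb f l, g j⟫_ℂ = ∑ l, ‖⟪eb f l, g j⟫_ℂ‖^2 := by
          apply Finset.sum_congr rfl; intro l _; rw [normSq_norm_sq]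
        rw [h3, hp]; norm_num
      rw [h1, Finset.sum_congr rfl (fun j _ => h2 j), Finset.sum_const, Finset.card_univ,
        Fintype.card_fin, nsmul_eq_mul, mul_one]
      exact_mod_cast hrk'
    have hdot : ∑ l, ev f l * t l ≤ psum (decr (ev f)) k :=
      dot_le (ev f) t k hk (ev_nonneg f) ht0 ht1 htsum
    have hspec : psum (decr (ev f)) k = psum (spec f) k := rfl
    calc psum α k
        = ∑ j, ∑ i ∈ univ.filter (fun i : Fin n => (i : ℕ) < k), ‖⟪g j, toE (f i)⟫_ℂ‖^2 := step1
      _ ≤ ∑ j, ∑ i : Fin n, ‖⟪g j, toE (f i)⟫_ℂ‖^2 := step3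
      _ = ∑ j, ∑ l, ev f l * Complex.normSq ⟪eb f l, g j⟫_ℂ := by
          apply Finset.sum_congr rfl; intro j _; exact step4 j
      _ = ∑ l, ev f l * t l := step5
      _ ≤ psum (spec f) k := hspec ▸ hdot
  · rw [psum_of_le (spec f) k (by omega), ← trace_eq f α hf, psum]
    exact Finset.sum_le_sum_of_subset_of_nonneg (Finset.filter_subset _ _)
      (fun i _ _ => hα0 i)

lemma psum_cast {n d : ℕ} (hd : d ≤ n) (α : Fin n → ℝ) (m : ℕ) (hm : m ≤ d) :
    psum (fun i : Fin d => α (Fin.castLE hd i)) m = psum α m := by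
  induction m with
  | zero => rw [psum_zero, psum_zero]
  | succ m ih =>
    rw [psum_succ _ m (by omega), psum_succ α m (by omega), ih (by omega)]
    rfl

theorem waterfilling_maj {n d : ℕ} (hd0 : 0 < d) (hd : d ≤ n) (α : Fin n → ℝ)
    (hα : Antitone α) (hα0 : ∀ i, 0 ≤ α i) (c : ℝ) (γ : Fin d → ℝ)
    (hwf : IsWaterFilling d hd0 hd α c γ) (β : Fin d → ℝ) (hβanti : Antitone β)
    (hsub : ∀ k : ℕ, psum α k ≤ psum β k) (hβsum : ∑ i, β i = ∑ i, α i) :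
    (∀ k : ℕ, psum γ k ≤ psum β k) ∧ (∑ i, γ i = ∑ i, β i) := by
  classical
  obtain ⟨hc, htr, hγ⟩ := hwf
  have hγsumα : ∑ i, γ i = ∑ i, α i := by
    rw [← htr]
    exact Finset.sum_congr rfl fun i _ => hγ i
  have hγsum : ∑ i, γ i = ∑ i, β i := by rw [hγsumα, hβsum]
  refine ⟨?_, hγsum⟩
  intro k
  rcases Nat.lt_or_ge k d with hk | hk
  · by_cases hcase : ∀ i : Fin d, (i : ℕ) < k → c ≤ β i
    · -- Case A
      set I : Finset (Fin d) :=
        univ.filter (fun i : Fin d => (i : ℕ) < k ∧ c < α (Fin.castLE hd i)) with hI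
      have hdown : ∀ i j : Fin d, j ≤ i → i ∈ I → j ∈ I := by
        intro i j hji hi
        simp only [hI, mem_filter, mem_univ, true_and] at hi ⊢
        obtain ⟨hi1, hi2⟩ := hi
        have hval : (j : ℕ) ≤ (i : ℕ) := hji
        exact ⟨by omega, lt_of_lt_of_le hi2 (hα (show Fin.castLE hd j ≤ Fin.castLE hd i from hji))⟩
      set m : ℕ := I.card with hm
      have hpre : I = univ.filter (fun i : Fin d => (i : ℕ) < m) :=
        down_closed_eq_prefix I hdown
      have hmk : m ≤ k := by
        have hsubI : I ⊆ univ.filter (fun i : Fin d => (i : ℕ) < k) := by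
          intro i hi
          simp only [hI, mem_filter, mem_univ, true_and] at hi ⊢
          exact hi.1
        have := Finset.card_le_card hsubI
        rw [card_filter_lt] at this
        omega
      have hsubIk : I ⊆ univ.filter (fun i : Fin d => (i : ℕ) < k) := by
        rw [hpre]
        intro i hi
        simp only [mem_filter, mem_univ, true_and] at hi ⊢
        omega
      -- split psum γ k
      have hsplitγ : psum γ k = ∑ i ∈ I, γ i
          + ∑ i ∈ (univ.filter (fun i : Fin d => (i : ℕ) < k)) \ I, γ i := by
        rw [psum, ← Finset.sum_sdiff hsubIk]
        ring
      have hγI : ∀ i ∈ I, γ i = α (Fin.castLE hd i) := by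
        intro i hi
        simp only [hI, mem_filter, mem_univ, true_and] at hi
        rw [hγ i, max_eq_left (le_of_lt hi.2)]
      have hγoff : ∀ i ∈ (univ.filter (fun i : Fin d => (i : ℕ) < k)) \ I, γ i = c := by
        intro i hi
        rw [Finset.mem_sdiff] at hi
        obtain ⟨hik, hni⟩ := hi
        simp only [mem_filter, mem_univ, true_and] at hik
        have : ¬ ((i : ℕ) < k ∧ c < α (Fin.castLE hd i)) := by
          intro hcon
          exact hni (by simp only [hI, mem_filter, mem_univ, true_and]; exact hcon)
        have hle : α (Fin.castLE hd i) ≤ c := by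
          rcases not_and_or.mp this with h | h
          · exact absurd hik h
          · linarith [not_lt.mp h]
        rw [hγ i, max_eq_right hle]
      have hcardoff : ((univ.filter (fun i : Fin d => (i : ℕ) < k)) \ I).card = k - m := by
        rw [Finset.card_sdiff_of_subset hsubIk, card_filter_lt, ← hm]
        omega
      have hsum1 : ∑ i ∈ I, γ i = psum α m := by
        rw [Finset.sum_congr rfl hγI, hpre]
        have : ∑ i ∈ univ.filter (fun i : Fin d => (i : ℕ) < m), α (Fin.castLE hd i)
            = psum (fun i : Fin d => α (Fin.castLE hd i)) m := rfl
        rw [this, psum_cast hd α m (by omega)]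
      have hsum2 : ∑ i ∈ (univ.filter (fun i : Fin d => (i : ℕ) < k)) \ I, γ i
          = ((k : ℝ) - m) * c := by
        rw [Finset.sum_congr rfl hγoff, Finset.sum_const, hcardoff, nsmul_eq_mul]
        have : ((k - m : ℕ) : ℝ) = (k : ℝ) - m := by
          have := hmk
          push_cast [Nat.cast_sub this]
          ring
        rw [this]
      -- β side
      have hmsubk : (univ.filter (fun i : Fin d => (i : ℕ) < m))
          ⊆ (univ.filter (fun i : Fin d => (i : ℕ) < k)) := by
        intro i hi
        simp only [mem_filter, mem_univ, true_and] at hi ⊢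
        omega
      have hsplitβ : psum β k = psum β m
          + ∑ i ∈ (univ.filter (fun i : Fin d => (i : ℕ) < k))
              \ (univ.filter (fun i : Fin d => (i : ℕ) < m)), β i := by
        rw [psum, psum, ← Finset.sum_sdiff hmsubk]
        ring
      have hcardsd : ((univ.filter (fun i : Fin d => (i : ℕ) < k))
          \ (univ.filter (fun i : Fin d => (i : ℕ) < m))).card = k - m := by
        rw [Finset.card_sdiff_of_subset hmsubk, card_filter_lt, card_filter_lt]
        omega
      have hβge : ((k : ℝ) - m) * c ≤ ∑ i ∈ (univ.filter (fun i : Fin d => (i : ℕ) < k))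
          \ (univ.filter (fun i : Fin d => (i : ℕ) < m)), β i := by
        have h1 : ∀ i ∈ (univ.filter (fun i : Fin d => (i : ℕ) < k))
            \ (univ.filter (fun i : Fin d => (i : ℕ) < m)), c ≤ β i := by
          intro i hi
          rw [Finset.mem_sdiff] at hi
          obtain ⟨hik, _⟩ := hi
          simp only [mem_filter, mem_univ, true_and] at hik
          exact hcase i hik
        have h2 := Finset.sum_le_sum h1
        rw [Finset.sum_const, hcardsd, nsmul_eq_mul] at h2
        have h3 : ((k - m : ℕ) : ℝ) = (k : ℝ) - m := by
          push_cast [Nat.cast_sub hmk]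
          ring
        rw [h3] at h2
        linarith
      have hαβ := hsub m
      rw [hsplitγ, hsum1, hsum2, hsplitβ]
      linarith
    · -- Case B
      push_neg at hcase
      obtain ⟨i0, hi0k, hi0β⟩ := hcase
      have hsplitγ : psum γ k + ∑ i ∈ univ.filter (fun i : Fin d => ¬ ((i : ℕ) < k)), γ i
          = ∑ i, γ i := Finset.sum_filter_add_sum_filter_not univ _ γ
      have hsplitβ : psum β k + ∑ i ∈ univ.filter (fun i : Fin d => ¬ ((i : ℕ) < k)), β i
          = ∑ i, β i := Finset.sum_filter_add_sum_filter_not univ _ β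
      have hcardtail : (univ.filter (fun i : Fin d => ¬ ((i : ℕ) < k))).card = d - k := by
        have h1 := Finset.card_filter_add_card_filter_not
          (s := (univ : Finset (Fin d))) (p := fun i : Fin d => (i : ℕ) < k)
        rw [card_filter_lt, Finset.card_univ, Fintype.card_fin] at h1
        omega
      have hγtail : ((d : ℝ) - k) * c
          ≤ ∑ i ∈ univ.filter (fun i : Fin d => ¬ ((i : ℕ) < k)), γ i := by
        have h1 : ∀ i ∈ univ.filter (fun i : Fin d => ¬ ((i : ℕ) < k)), c ≤ γ i := by
          intro i _
          rw [hγ i]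
          exact le_max_right _ _
        have h2 := Finset.sum_le_sum h1
        rw [Finset.sum_const, hcardtail, nsmul_eq_mul] at h2
        have h3 : ((d - k : ℕ) : ℝ) = (d : ℝ) - k := by
          push_cast [Nat.cast_sub (le_of_lt hk)]
          ring
        rw [h3] at h2
        linarith
      have hβtail : ∑ i ∈ univ.filter (fun i : Fin d => ¬ ((i : ℕ) < k)), β i
          ≤ ((d : ℝ) - k) * c := by
        have h1 : ∀ i ∈ univ.filter (fun i : Fin d => ¬ ((i : ℕ) < k)), β i ≤ c := by
          intro i hi
          simp only [mem_filter, mem_univ, true_and, not_lt] at hi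
          have : i0 ≤ i := Fin.le_def.mpr (by omega)
          linarith [hβanti this]
        have h2 := Finset.sum_le_sum h1
        rw [Finset.sum_const, hcardtail, nsmul_eq_mul] at h2
        have h3 : ((d - k : ℕ) : ℝ) = (d : ℝ) - k := by
          push_cast [Nat.cast_sub (le_of_lt hk)]
          ring
        rw [h3] at h2
        linarith
      linarith [hγsum]
  · rw [psum_of_le γ k (by omega), psum_of_le β k (by omega), hγsum]

/-- The water-filling spectrum is optimal: for any sequence with squared norms
α and any convex potential φ, the potential of the frame operator spectrum is
at least that of the water-filling; equality for a strictly convex φ forces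
the spectrum to be the water-filling. -/
theorem stmt19 {n d : ℕ} (hd0 : 0 < d) (hd : d ≤ n)
    (α : Fin n → ℝ) (hα : Antitone α) (hα0 : ∀ i, 0 ≤ α i)
    (c : ℝ) (γop : Fin d → ℝ) (hwf : IsWaterFilling d hd0 hd α c γop)
    (f : Fin n → Fin d → ℂ) (hf : ∀ i, sqNorm (f i) = α i) :
    (∀ φ : ℝ → ℝ, ConvexOn ℝ (Set.Ici 0) φ → (∀ x, 0 ≤ x → 0 ≤ φ x) →
        (∑ i, φ (γop i)) ≤ ∑ i, φ (spec f i)) ∧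
    (∀ φ : ℝ → ℝ, StrictConvexOn ℝ (Set.Ici 0) φ → (∀ x, 0 ≤ x → 0 ≤ φ x) →
        (∑ i, φ (γop i)) = (∑ i, φ (spec f i)) → spec f = γop) := by
  have hγanti : Antitone γop := by
    intro i j hij
    rw [hwf.2.2 i, hwf.2.2 j]
    exact max_le_max (hα (show Fin.castLE hd i ≤ Fin.castLE hd j from hij)) le_rfl
  have hγ0 : ∀ i, 0 ≤ γop i := fun i => by
    rw [hwf.2.2 i]; exact le_trans (hα0 _) (le_max_left _ _)
  have hsanti : Antitone (spec f) := spec_antitone f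
  have hs0 : ∀ j, 0 ≤ spec f j := spec_nonneg f
  have hsum : ∑ i, spec f i = ∑ i, α i := (trace_eq f α hf).symm
  have hsubαs : ∀ k, psum α k ≤ psum (spec f) k := alpha_submaj f α hf hα0
  obtain ⟨hsubγs, hγsum⟩ :=
    waterfilling_maj hd0 hd α hα hα0 c γop hwf (spec f) hsanti hsubαs hsum
  constructor
  · intro φ hφ _
    exact (karamata γop (spec f) hγanti hsanti hγ0 hs0 hsubγs hγsum φ hφ).1
  · intro φ hφs _ heq
    exact (karamata γop (spec f) hγanti hsanti hγ0 hs0 hsubγs hγsum φ hφs.convexOn).2 hφs heq
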